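/- Let p, q : ℕ → ℝ be nonnegative summable sequences with entries in [0,1], and let Q : ℕ → ℕ → ℝ be a doubly stochastic infinite matrix, i.e., Q i k ≥ 0 for all i, k, ∑_{k∈ℕ} Q i k = 1 for every i, and ∑_{i∈ℕ} Q i k = 1 for every k. Suppose q i = ∑_{k∈ℕ} Q i k · p k for every i. Then for every convex function φ : ℝ → ℝ on [0,1] with φ(0) = 0, assuming φ ∘ p and φ ∘ q are summable, ∑_{i∈ℕ} φ(q i) ≤ ∑_{k∈ℕ} φ(p k). -/
import Mathlib

open Set

/-- Supporting line at an interior point of `[0,1]`. -/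
lemma support_line {φ : ℝ → ℝ} (hφ : ConvexOn ℝ (Icc (0:ℝ) 1) φ) {m : ℝ}
    (hm : m ∈ Ioo (0:ℝ) 1) :
    ∃ c : ℝ, ∀ x ∈ Icc (0:ℝ) 1, φ m + c * (x - m) ≤ φ x := by
  obtain ⟨hm0, hm1⟩ := hm
  have hmI : m ∈ Icc (0:ℝ) 1 := ⟨hm0.le, hm1.le⟩
  set S : Set ℝ := (fun x => (φ m - φ x) / (m - x)) '' Ico (0:ℝ) m with hS
  have hne : S.Nonempty := ⟨_, ⟨0, ⟨le_refl 0, hm0⟩, rfl⟩⟩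
  have hub : ∀ s ∈ S, s ≤ (φ 1 - φ m) / (1 - m) := by
    rintro s ⟨x, ⟨hx0, hxm⟩, rfl⟩
    exact hφ.slope_mono_adjacent ⟨hx0, (hxm.trans hm1).le⟩ (right_mem_Icc.2 zero_le_one) hxm hm1
  have hbdd : BddAbove S := ⟨_, hub⟩
  refine ⟨sSup S, fun x hx => ?_⟩
  rcases lt_trichotomy x m with h | h | h
  · have hmem : (φ m - φ x) / (m - x) ∈ S := ⟨x, ⟨hx.1, h⟩, rfl⟩
    have hle : (φ m - φ x) / (m - x) ≤ sSup S := le_csSup hbdd hmem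
    have hpos : (0:ℝ) < m - x := by linarith
    rw [div_le_iff₀ hpos] at hle
    nlinarith
  · simp [h]
  · have hub' : sSup S ≤ (φ x - φ m) / (x - m) := by
      apply csSup_le hne
      rintro s ⟨y, ⟨hy0, hym⟩, rfl⟩
      exact hφ.slope_mono_adjacent ⟨hy0, (hym.trans hm1).le⟩ hx hym h
    have hpos : (0:ℝ) < x - m := by linarith
    rw [le_div_iff₀ hpos] at hub'
    nlinarith

/-- A function convex on `[0,1]` is bounded there. -/
lemma convex_bounded {φ : ℝ → ℝ} (hφ : ConvexOn ℝ (Icc (0:ℝ) 1) φ) :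
    ∃ C : ℝ, 0 ≤ C ∧ ∀ x ∈ Icc (0:ℝ) 1, |φ x| ≤ C := by
  obtain ⟨c, hc⟩ := support_line hφ (by norm_num : (1/2 : ℝ) ∈ Ioo (0:ℝ) 1)
  refine ⟨|φ 0| + |φ 1| + |φ (1/2)| + |c|, by positivity, fun x hx => ?_⟩
  obtain ⟨hx0, hx1⟩ := hx
  have hupper : φ x ≤ (1 - x) * φ 0 + x * φ 1 := by
    have := hφ.2 (left_mem_Icc.2 zero_le_one) (right_mem_Icc.2 zero_le_one)
      (by linarith : (0:ℝ) ≤ 1 - x) hx0 (by ring)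
    simpa using this
  have hlower := hc x ⟨hx0, hx1⟩
  have h1 : (1 - x) * φ 0 ≤ |φ 0| := by
    calc (1 - x) * φ 0 ≤ (1 - x) * |φ 0| :=
          mul_le_mul_of_nonneg_left (le_abs_self _) (by linarith)
      _ ≤ 1 * |φ 0| := mul_le_mul_of_nonneg_right (by linarith) (abs_nonneg _)
      _ = |φ 0| := one_mul _
  have h2 : x * φ 1 ≤ |φ 1| := by
    calc x * φ 1 ≤ x * |φ 1| := mul_le_mul_of_nonneg_left (le_abs_self _) hx0
      _ ≤ 1 * |φ 1| := mul_le_mul_of_nonneg_right hx1 (abs_nonneg _)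
      _ = |φ 1| := one_mul _
  have h3 : c * (x - 1/2) ≥ -|c| := by
    have : |c * (x - 1/2)| ≤ |c| * 1 := by
      rw [abs_mul]
      exact mul_le_mul_of_nonneg_left (by rw [abs_le]; constructor <;> linarith) (abs_nonneg _)
    have := neg_abs_le (c * (x - 1/2))
    nlinarith [abs_nonneg c]
  rw [abs_le]
  constructor
  · nlinarith [neg_abs_le (φ (1/2)), abs_nonneg (φ 0), abs_nonneg (φ 1), abs_nonneg c]
  · nlinarith [abs_nonneg (φ (1/2)), abs_nonneg c, abs_nonneg (φ 0), abs_nonneg (φ 1)]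

/-- Countable Jensen inequality. -/
lemma jensen_tsum {φ : ℝ → ℝ} (hφ : ConvexOn ℝ (Icc (0:ℝ) 1) φ) (hφ0 : φ 0 = 0)
    (a x : ℕ → ℝ) (ha : ∀ k, 0 ≤ a k) (hx : ∀ k, x k ∈ Icc (0:ℝ) 1)
    (hsa : Summable a) (hsum : ∑' k, a k = 1) :
    φ (∑' k, a k * x k) ≤ ∑' k, a k * φ (x k) := by
  obtain ⟨C, hC0, hC⟩ := convex_bounded hφ
  have hax_nonneg : ∀ k, 0 ≤ a k * x k := fun k => mul_nonneg (ha k) (hx k).1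
  have hax_le : ∀ k, a k * x k ≤ a k := fun k => by
    nlinarith [(hx k).2, ha k]
  have hsax : Summable fun k => a k * x k :=
    Summable.of_nonneg_of_le hax_nonneg hax_le hsa
  have hsaφ : Summable fun k => a k * φ (x k) := by
    apply Summable.of_norm
    refine Summable.of_nonneg_of_le (fun k => norm_nonneg _) (fun k => ?_) (hsa.mul_right C)
    rw [Real.norm_eq_abs, abs_mul, abs_of_nonneg (ha k)]
    exact mul_le_mul_of_nonneg_left (hC _ (hx k)) (ha k)
  set m : ℝ := ∑' k, a k * x k with hm
  have hm0 : 0 ≤ m := tsum_nonneg hax_nonneg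
  have hm1 : m ≤ 1 := by
    rw [← hsum]; exact Summable.tsum_le_tsum hax_le hsax hsa
  rcases eq_or_lt_of_le hm0 with h0 | h0
  · -- m = 0
    have hzero : ∀ k, a k * x k = 0 := by
      intro k
      have h1 : a k * x k ≤ m := Summable.le_tsum hsax k (fun j _ => hax_nonneg j)
      have := hax_nonneg k
      linarith [h0]
    have : ∀ k, a k * φ (x k) = 0 := by
      intro k
      rcases mul_eq_zero.1 (hzero k) with h | h
      · rw [h, zero_mul]
      · rw [h, hφ0, mul_zero]
    rw [← h0, hφ0]
    rw [tsum_congr this, tsum_zero]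
  rcases eq_or_lt_of_le hm1 with h1 | h1
  · -- m = 1
    have hb_nonneg : ∀ k, 0 ≤ a k * (1 - x k) := fun k =>
      mul_nonneg (ha k) (by linarith [(hx k).2])
    have hsb : Summable fun k => a k * (1 - x k) := by
      have : (fun k => a k * (1 - x k)) = fun k => a k - a k * x k := by
        funext k; ring
      rw [this]; exact hsa.sub hsax
    have hbsum : ∑' k, a k * (1 - x k) = 0 := by
      have : (fun k => a k * (1 - x k)) = fun k => a k - a k * x k := by
        funext k; ring
      rw [this, Summable.tsum_sub hsa hsax, hsum, ← hm, ← h1, sub_self]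
    have hzero : ∀ k, a k * (1 - x k) = 0 := by
      intro k
      have hle := Summable.le_tsum hsb k (fun j _ => hb_nonneg j)
      rw [hbsum] at hle
      linarith [hb_nonneg k]
    have heq : ∀ k, a k * φ (x k) = a k * φ 1 := by
      intro k
      rcases mul_eq_zero.1 (hzero k) with h | h
      · rw [h, zero_mul, zero_mul]
      · have : x k = 1 := by linarith
        rw [this]
    rw [tsum_congr heq, tsum_mul_right, hsum, one_mul, h1]
  · -- 0 < m < 1
    obtain ⟨c, hc⟩ := support_line hφ ⟨h0, h1⟩
    have hlin : Summable fun k => (φ m - c * m) * a k + c * (a k * x k) :=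
      (hsa.mul_left _).add (hsax.mul_left c)
    have key : ∀ k, (φ m - c * m) * a k + c * (a k * x k) ≤ a k * φ (x k) := by
      intro k
      have := hc (x k) (hx k)
      nlinarith [ha k]
    calc φ m = (φ m - c * m) * 1 + c * m := by ring
      _ = (φ m - c * m) * (∑' k, a k) + c * (∑' k, a k * x k) := by rw [hsum, ← hm]
      _ = ∑' k, ((φ m - c * m) * a k + c * (a k * x k)) := by
          rw [Summable.tsum_add (hsa.mul_left _) (hsax.mul_left c), tsum_mul_left, tsum_mul_left]
      _ ≤ ∑' k, a k * φ (x k) := Summable.tsum_le_tsum key hlin hsaφ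

set_option maxHeartbeats 1000000 in
/-- If `q` is obtained from `p` by an infinite doubly stochastic matrix `Q`, then for every
function `φ` convex on `[0,1]` with `φ 0 = 0` (assuming `φ ∘ p` and `φ ∘ q` summable),
`∑' i, φ (q i) ≤ ∑' k, φ (p k)`. -/
theorem tsum_convex_le_of_doublyStochastic
    (p q : ℕ → ℝ) (Q : ℕ → ℕ → ℝ) (φ : ℝ → ℝ)
    (hp : ∀ k, p k ∈ Set.Icc (0 : ℝ) 1)
    (hq : ∀ i, q i ∈ Set.Icc (0 : ℝ) 1)
    (hps : Summable p) (hqs : Summable q)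
    (hQ : ∀ i k, 0 ≤ Q i k)
    (hrow : ∀ i, ∑' k, Q i k = 1)
    (hcol : ∀ k, ∑' i, Q i k = 1)
    (hqp : ∀ i, q i = ∑' k, Q i k * p k)
    (hφ : ConvexOn ℝ (Set.Icc (0 : ℝ) 1) φ) (hφ0 : φ 0 = 0)
    (hsp : Summable (fun k => φ (p k))) (hsq : Summable (fun i => φ (q i))) :
    ∑' i, φ (q i) ≤ ∑' k, φ (p k) := by
  -- rows and columns of Q are summable
  have hrows : ∀ i, Summable fun k => Q i k := by
    intro i
    by_contra h
    have := hrow i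
    rw [tsum_eq_zero_of_not_summable h] at this
    exact one_ne_zero this.symm
  have hcols : ∀ k, Summable fun i => Q i k := by
    intro k
    by_contra h
    have := hcol k
    rw [tsum_eq_zero_of_not_summable h] at this
    exact one_ne_zero this.symm
  -- pointwise Jensen
  have hjensen : ∀ i, φ (q i) ≤ ∑' k, Q i k * φ (p k) := by
    intro i
    rw [hqp i]
    exact jensen_tsum hφ hφ0 (Q i) p (hQ i) hp (hrows i) (hrow i)
  -- summability of the double family, indexed (k, i)
  have hsums : ∀ k : ℕ, (∑' i, Q i k * |φ (p k)|) = |φ (p k)| := by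
    intro k
    rw [tsum_mul_right, hcol k, one_mul]
  have hGabs' : Summable fun ki : ℕ × ℕ => Q ki.2 ki.1 * |φ (p ki.1)| := by
    rw [summable_prod_of_nonneg (fun ki => mul_nonneg (hQ _ _) (abs_nonneg _))]
    constructor
    · intro k
      exact Summable.mul_right (|φ (p k)|) (hcols k)
    · exact hsp.abs.congr fun k => (hsums k).symm
  have hGabs : Summable fun ki : ℕ × ℕ => |Q ki.2 ki.1 * φ (p ki.1)| :=
    hGabs'.congr fun ki => by rw [abs_mul, abs_of_nonneg (hQ _ _)]
  have hG : Summable fun ki : ℕ × ℕ => Q ki.2 ki.1 * φ (p ki.1) :=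
    summable_abs_iff.1 hGabs
  have hF : Summable fun ik : ℕ × ℕ => Q ik.1 ik.2 * φ (p ik.2) := hG.prod_symm
  have hrowsums : Summable fun i => ∑' k, Q i k * φ (p k) := hF.prod
  -- Fubini
  have hcomm : ∑' i, ∑' k, Q i k * φ (p k) = ∑' k, ∑' i, Q i k * φ (p k) :=
    Summable.tsum_comm (f := fun k i => Q i k * φ (p k)) hG
  calc ∑' i, φ (q i) ≤ ∑' i, ∑' k, Q i k * φ (p k) := Summable.tsum_le_tsum hjensen hsq hrowsums
    _ = ∑' k, ∑' i, Q i k * φ (p k) := hcomm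
    _ = ∑' k, φ (p k) := by
        apply tsum_congr
        intro k
        rw [tsum_mul_right, hcol k, one_mul]
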